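/- Let μ⁰ > 0, λ > 0 and let C be an n×n real symmetric matrix. Let S⁰ be the unique minimizer over symmetric positive definite matrices of (1/2)‖S − C‖_F² − μ⁰ log det S, and set Z⁰ = (S⁰ − C)/λ. Then S⁰ is positive definite, Z⁰ = (μ⁰/λ)(S⁰)⁻¹ is positive definite, S⁰ Z⁰ = (μ⁰/λ)·I, and tr(S⁰ Z⁰) = n μ⁰/λ. -/

import Mathlib

open Matrix

/-- The smoothing objective for the positive semidefinite cone:
`F_μ(X) = (1/2)‖X − C‖_F² − μ log det X`, with the Frobenius norm squared
expressed via the trace inner product as `tr((X − C)(X − C)ᵀ)`. -/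
noncomputable def psdObj (n : ℕ) (μ : ℝ) (C X : Matrix (Fin n) (Fin n) ℝ) : ℝ :=
  (1 / 2) * Matrix.trace ((X - C) * (X - C)ᵀ) - μ * Real.log X.det


/-- Quadratic form scaling. -/
private lemma quadform_smul {n : ℕ} (M : Matrix (Fin n) (Fin n) ℝ) (a : ℝ) (x : Fin n → ℝ) :
    (a • x) ⬝ᵥ M *ᵥ (a • x) = a ^ 2 * (x ⬝ᵥ M *ᵥ x) := by
  rw [Matrix.mulVec_smul, dotProduct_smul, smul_dotProduct, smul_eq_mul, smul_eq_mul]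
  ring

/-- A positive definite matrix perturbed by a small multiple of a symmetric matrix
stays positive definite. -/
private lemma posdef_perturb {n : ℕ} (S H : Matrix (Fin n) (Fin n) ℝ)
    (hS : S.PosDef) (hH : H.IsSymm) :
    ∃ ε > 0, ∀ t : ℝ, |t| < ε → (S + t • H).PosDef := by
  have hsym : ∀ t : ℝ, (S + t • H).IsHermitian := by
    intro t
    rw [Matrix.IsHermitian, conjTranspose_eq_transpose_of_trivial, transpose_add,
      transpose_smul, hH.eq]
    have hSsymm : Sᵀ = S := by
      have := hS.isHermitian.eq
      rwa [conjTranspose_eq_transpose_of_trivial] at this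
    rw [hSsymm]
  rcases Nat.eq_zero_or_pos n with hn | hn
  · refine ⟨1, one_pos, fun t _ => ⟨hsym t, fun x hx => ?_⟩⟩
    exfalso; apply hx; subst hn; ext i; exact absurd i.2 (by omega)
  haveI : Nonempty (Fin n) := Fin.pos_iff_nonempty.mp hn
  haveI : Nontrivial (Fin n → ℝ) := inferInstance
  -- compactness of the unit sphere
  have hne : (Metric.sphere (0 : Fin n → ℝ) 1).Nonempty := by
    apply NormedSpace.sphere_nonempty.mpr; norm_num
  have hcpt : IsCompact (Metric.sphere (0 : Fin n → ℝ) 1) := isCompact_sphere 0 1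
  have hcontS : Continuous fun x : Fin n → ℝ => x ⬝ᵥ S *ᵥ x :=
    (continuous_id).dotProduct ((continuous_const : Continuous fun _ : Fin n → ℝ => S).matrix_mulVec continuous_id)
  have hcontH : Continuous fun x : Fin n → ℝ => |x ⬝ᵥ H *ᵥ x| :=
    ((continuous_id).dotProduct ((continuous_const : Continuous fun _ : Fin n → ℝ => H).matrix_mulVec continuous_id)).abs
  obtain ⟨x0, hx0mem, hx0min'⟩ := hcpt.exists_isMinOn hne hcontS.continuousOn
  have hx0min := isMinOn_iff.mp hx0min'
  obtain ⟨y0, hy0mem, hy0max'⟩ := hcpt.exists_isMaxOn hne hcontH.continuousOn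
  have hy0max := isMaxOn_iff.mp hy0max'
  set c := x0 ⬝ᵥ S *ᵥ x0 with hc
  set K := |y0 ⬝ᵥ H *ᵥ y0| with hK
  have hcpos : 0 < c := by
    suffices hx0ne : x0 ≠ 0 by simpa [hc] using hS.dotProduct_mulVec_pos hx0ne
    intro h0
    have := mem_sphere_zero_iff_norm.mp hx0mem
    rw [h0, norm_zero] at this; norm_num at this
  have hKnn : 0 ≤ K := abs_nonneg _
  refine ⟨c / (K + 1), by positivity, fun t ht => Matrix.PosDef.of_dotProduct_mulVec_pos (hsym t) fun x hx => ?_⟩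
  have hxnorm : ‖x‖ ≠ 0 := norm_ne_zero_iff.mpr hx
  set u : Fin n → ℝ := ‖x‖⁻¹ • x with hu
  have humem : u ∈ Metric.sphere (0 : Fin n → ℝ) 1 := by
    rw [mem_sphere_zero_iff_norm, hu, norm_smul, norm_inv, norm_norm,
      inv_mul_cancel₀ hxnorm]
  have hxu : x = ‖x‖ • u := by
    rw [hu, smul_smul, mul_inv_cancel₀ hxnorm, one_smul]
  have key : x ⬝ᵥ (S + t • H) *ᵥ x = ‖x‖ ^ 2 * (u ⬝ᵥ S *ᵥ u + t * (u ⬝ᵥ H *ᵥ u)) := by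
    conv_lhs => rw [hxu]
    rw [quadform_smul]
    congr 1
    rw [add_mulVec, dotProduct_add, Matrix.smul_mulVec, dotProduct_smul, smul_eq_mul]
  have h1 : c ≤ u ⬝ᵥ S *ᵥ u := hx0min u humem
  have h2 : |u ⬝ᵥ H *ᵥ u| ≤ K := hy0max u humem
  have h3 : -(c / (K + 1) * K) ≤ t * (u ⬝ᵥ H *ᵥ u) := by
    have : |t * (u ⬝ᵥ H *ᵥ u)| ≤ c / (K + 1) * K := by
      rw [abs_mul]
      exact mul_le_mul ht.le h2 (abs_nonneg _) (by positivity)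
    linarith [neg_abs_le (t * (u ⬝ᵥ H *ᵥ u))]
  have h4 : 0 < u ⬝ᵥ S *ᵥ u + t * (u ⬝ᵥ H *ᵥ u) := by
    have : c / (K + 1) * K < c := by
      rw [div_mul_eq_mul_div, div_lt_iff₀ (by positivity)]
      nlinarith
    linarith
  have hstar : star x = x := by simp
  rw [hstar, key]
  have : (0:ℝ) < ‖x‖ ^ 2 := by positivity
  positivity

private lemma psd_stationarity {n : ℕ} (μ0 : ℝ) (hμ : 0 < μ0)
    (C S0 : Matrix (Fin n) (Fin n) ℝ) (hCs : C.IsSymm)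
    (hS0s : S0.IsSymm) (hS0 : S0.PosDef)
    (hmin : ∀ X : Matrix (Fin n) (Fin n) ℝ, X.IsSymm → X.PosDef →
      psdObj n μ0 C S0 ≤ psdObj n μ0 C X) :
    S0 - C = μ0 • S0⁻¹ := by
  have hdetu : IsUnit S0.det := isUnit_iff_ne_zero.mpr hS0.det_pos.ne'
  have hSinvs : (S0⁻¹).IsSymm := by
    rw [Matrix.IsSymm, Matrix.transpose_nonsing_inv, hS0s.eq]
  set D : Matrix (Fin n) (Fin n) ℝ := S0 - C with hDdef
  have hDs : D.IsSymm := by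
    rw [Matrix.IsSymm, hDdef, transpose_sub, hS0s.eq, hCs.eq]
  -- key stationarity identity for every symmetric direction H
  have key : ∀ H : Matrix (Fin n) (Fin n) ℝ, H.IsSymm →
      Matrix.trace (D * H) = μ0 * Matrix.trace (S0⁻¹ * H) := by
    intro H hH
    set M : Matrix (Fin n) (Fin n) ℝ := S0⁻¹ * H with hMdef
    set q : Polynomial ℝ :=
      ((1 + (Polynomial.X : Polynomial ℝ) • M.map Polynomial.C).det).divX.divX with hq
    have hfact : ∀ t : ℝ, S0 + t • H = S0 * (1 + t • M) := by
      intro t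
      rw [mul_add, mul_one, Matrix.mul_smul, hMdef, ← Matrix.mul_assoc,
        Matrix.mul_nonsing_inv _ hdetu, Matrix.one_mul]
    have hdet : ∀ t : ℝ,
        (S0 + t • H).det = S0.det * (1 + M.trace * t + q.eval t * t ^ 2) := by
      intro t
      rw [hfact, det_mul, Matrix.det_one_add_smul]
    -- derivative of the determinant factor
    have hpoly : HasDerivAt
        (fun t : ℝ => 1 + M.trace * t + Polynomial.eval t q * t ^ 2) M.trace 0 := by
      have h1 : HasDerivAt (fun t : ℝ => 1 + M.trace * t) M.trace 0 := by
        simpa using ((hasDerivAt_id (0:ℝ)).const_mul M.trace).const_add 1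
      have h2 : HasDerivAt (fun t : ℝ => Polynomial.eval t q * t ^ 2) 0 0 := by
        simpa using (q.hasDerivAt (0:ℝ)).fun_mul (hasDerivAt_pow 2 (0:ℝ))
      simpa using h1.fun_add h2
    have hdetderiv : HasDerivAt (fun t : ℝ => (S0 + t • H).det) (S0.det * M.trace) 0 := by
      have hfun : (fun t : ℝ => (S0 + t • H).det)
          = fun t : ℝ => S0.det * (1 + M.trace * t + Polynomial.eval t q * t ^ 2) :=
        funext hdet
      rw [hfun]
      exact hpoly.const_mul S0.det
    have hdet0 : (S0 + (0:ℝ) • H).det = S0.det := by simp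
    have hlog : HasDerivAt (fun t : ℝ => Real.log ((S0 + t • H).det)) M.trace 0 := by
      have h := hdetderiv.log (by rw [hdet0]; exact hS0.det_pos.ne')
      convert h using 1
      rw [hdet0, mul_div_assoc, mul_comm, div_mul_cancel₀ _ hS0.det_pos.ne']
    -- derivative of the quadratic part
    have hquadeq : ∀ t : ℝ, Matrix.trace ((S0 + t • H - C) * (S0 + t • H - C)ᵀ)
        = Matrix.trace (D * D) + (2 * Matrix.trace (D * H)) * t
          + Matrix.trace (H * H) * t ^ 2 := by
      intro t
      have hDH : S0 + t • H - C = D + t • H := by rw [hDdef]; abel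
      rw [hDH, transpose_add, transpose_smul, hH.eq, hDs.eq]
      simp only [add_mul, mul_add, Matrix.smul_mul, Matrix.mul_smul, trace_add, trace_smul,
        smul_smul, smul_eq_mul, Matrix.trace_mul_comm H D]
      ring
    have hquad : HasDerivAt
        (fun t : ℝ => (1/2) * Matrix.trace ((S0 + t • H - C) * (S0 + t • H - C)ᵀ))
        (Matrix.trace (D * H)) 0 := by
      have hfun : (fun t : ℝ => Matrix.trace ((S0 + t • H - C) * (S0 + t • H - C)ᵀ))
          = fun t : ℝ => Matrix.trace (D * D) + (2 * Matrix.trace (D * H)) * t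
            + Matrix.trace (H * H) * t ^ 2 := funext hquadeq
      have h1 : HasDerivAt
          (fun t : ℝ => Matrix.trace (D * D) + (2 * Matrix.trace (D * H)) * t)
          (2 * Matrix.trace (D * H)) 0 := by
        simpa using ((hasDerivAt_id (0:ℝ)).const_mul (2 * Matrix.trace (D * H))).const_add
          (Matrix.trace (D * D))
      have h2 : HasDerivAt (fun t : ℝ => Matrix.trace (H * H) * t ^ 2) 0 0 := by
        simpa using (hasDerivAt_pow 2 (0:ℝ)).const_mul (Matrix.trace (H * H))
      have h3 := (h1.fun_add h2).const_mul (1/2 : ℝ)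
      have hfun2 : (fun t : ℝ =>
            (1/2) * Matrix.trace ((S0 + t • H - C) * (S0 + t • H - C)ᵀ))
          = fun t : ℝ => (1/2) * (Matrix.trace (D * D) + (2 * Matrix.trace (D * H)) * t
            + Matrix.trace (H * H) * t ^ 2) := by
        funext t; rw [hquadeq]
      rw [hfun2]
      exact h3.congr_deriv (by ring)
    -- derivative of the objective along the line
    set g : ℝ → ℝ := fun t => psdObj n μ0 C (S0 + t • H) with hg
    have hgderiv : HasDerivAt g (Matrix.trace (D * H) - μ0 * M.trace) 0 := by
      have := hquad.fun_sub (hlog.const_mul μ0)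
      simpa [hg, psdObj] using this
    -- local minimum at 0
    obtain ⟨ε, hε, hball⟩ := posdef_perturb S0 H hS0 hH
    have hloc : IsLocalMin g 0 := by
      refine Metric.eventually_nhds_iff.mpr ⟨ε, hε, fun t ht => ?_⟩
      rw [Real.dist_eq, sub_zero] at ht
      have hsymm : (S0 + t • H).IsSymm := by
        rw [Matrix.IsSymm, transpose_add, transpose_smul, hS0s.eq, hH.eq]
      have hg0 : g 0 = psdObj n μ0 C S0 := by simp [hg]
      rw [hg0]
      exact hmin _ hsymm (hball t ht)
    have hzero := hloc.hasDerivAt_eq_zero hgderiv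
    have : Matrix.trace (D * H) = μ0 * M.trace := by linarith [hzero]
    rw [this, hMdef]
  -- apply to H := D - μ0 • S0⁻¹
  set H : Matrix (Fin n) (Fin n) ℝ := D - μ0 • S0⁻¹ with hHdef
  have hHs : H.IsSymm := by
    rw [Matrix.IsSymm, hHdef, transpose_sub, transpose_smul, hDs.eq, hSinvs.eq]
  have hkey := key H hHs
  have htrHH : Matrix.trace (H * H) = 0 := by
    have : H * H = D * H - μ0 • (S0⁻¹ * H) := by
      rw [hHdef, Matrix.sub_mul, Matrix.smul_mul]
    rw [this, trace_sub, trace_smul, smul_eq_mul, hkey, sub_self]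
  have hHzero : H = 0 := by
    have hsum : ∑ i : Fin n, ∑ j : Fin n, (H i j) ^ 2 = 0 := by
      have : Matrix.trace (H * H) = ∑ i : Fin n, ∑ j : Fin n, H i j * H j i := by
        simp [Matrix.trace, Matrix.mul_apply, Matrix.diag]
      rw [this] at htrHH
      rw [← htrHH]
      refine Finset.sum_congr rfl fun i _ => Finset.sum_congr rfl fun j _ => ?_
      have : H j i = H i j := by
        conv_lhs => rw [← hHs.eq]
        rfl
      rw [this]; ring
    ext i j
    have h1 : ∀ i ∈ Finset.univ, (0:ℝ) ≤ ∑ j : Fin n, (H i j) ^ 2 :=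
      fun i _ => Finset.sum_nonneg fun j _ => sq_nonneg _
    have h2 := (Finset.sum_eq_zero_iff_of_nonneg h1).mp hsum i (Finset.mem_univ i)
    have h3 := (Finset.sum_eq_zero_iff_of_nonneg
      (fun j _ => sq_nonneg (H i j))).mp h2 j (Finset.mem_univ j)
    simpa using pow_eq_zero_iff (n := 2) (by norm_num) |>.mp h3
  have : D - μ0 • S0⁻¹ = 0 := hHzero
  rw [hDdef] at this ⊢
  exact sub_eq_zero.mp this

/-- Let `μ⁰ > 0`, `λ > 0`, `C` symmetric, let `S⁰` be the (unique) minimizer of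
`(1/2)‖S − C‖_F² − μ⁰ log det S` over symmetric positive definite matrices, and
`Z⁰ = (S⁰ − C)/λ`. Then `S⁰` is positive definite, `Z⁰ = (μ⁰/λ)(S⁰)⁻¹` is positive
definite, `S⁰Z⁰ = (μ⁰/λ)·I`, and `tr(S⁰Z⁰) = n μ⁰/λ`. -/
theorem stmt8 (n : ℕ) (μ0 lam : ℝ) (hμ : 0 < μ0) (hlam : 0 < lam)
    (C S0 : Matrix (Fin n) (Fin n) ℝ) (hCs : C.IsSymm)
    (hS0s : S0.IsSymm) (hS0 : S0.PosDef)
    (hmin : ∀ X : Matrix (Fin n) (Fin n) ℝ, X.IsSymm → X.PosDef →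
      psdObj n μ0 C S0 ≤ psdObj n μ0 C X) :
    let Z0 : Matrix (Fin n) (Fin n) ℝ := lam⁻¹ • (S0 - C)
    S0.PosDef ∧ Z0 = (μ0 / lam) • S0⁻¹ ∧ Z0.PosDef ∧
    S0 * Z0 = (μ0 / lam) • (1 : Matrix (Fin n) (Fin n) ℝ) ∧
    Matrix.trace (S0 * Z0) = n * μ0 / lam := by
  intro Z0
  have hdetu : IsUnit S0.det := isUnit_iff_ne_zero.mpr hS0.det_pos.ne'
  have hstat : S0 - C = μ0 • S0⁻¹ := psd_stationarity μ0 hμ C S0 hCs hS0s hS0 hmin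
  have hZ : Z0 = (μ0 / lam) • S0⁻¹ := by
    show lam⁻¹ • (S0 - C) = (μ0 / lam) • S0⁻¹
    rw [hstat, smul_smul]
    congr 1
    field_simp
  have hmul : S0 * Z0 = (μ0 / lam) • (1 : Matrix (Fin n) (Fin n) ℝ) := by
    rw [hZ, Matrix.mul_smul, Matrix.mul_nonsing_inv _ hdetu]
  have hZpos : Z0.PosDef := by
    rw [hZ]
    have hinv := hS0.inv
    refine Matrix.PosDef.of_dotProduct_mulVec_pos ?_ ?_
    · rw [Matrix.IsHermitian, conjTranspose_smul]
      rw [hinv.1.eq]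
      congr 1
    · intro x hx
      rw [Matrix.smul_mulVec, dotProduct_smul, smul_eq_mul]
      exact mul_pos (div_pos hμ hlam) (hinv.dotProduct_mulVec_pos hx)
  refine ⟨hS0, hZ, hZpos, hmul, ?_⟩
  rw [hmul, trace_smul, trace_one, smul_eq_mul]
  simp [Fintype.card_fin]
  ring
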